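/- Fix ε, τ > 0, 0 < η ≤ τ, and 0 < δ ≤ e^{-ε/2}/2. Let φ(·, ν) be a cost function and let EM_ν be the measure with density proportional to 1{φ(x,ν) ≤ τ} exp(-φ(x,ν)ε/(4η)) dx. Suppose: (i) sup over ν̃ adjacent to ν̂ and x with φ(x,ν̂) ≤ τ or φ(x,ν̃) ≤ τ of |φ(x,ν̂) - φ(x,ν̃)| ≤ η, and (ii) h(A_{τ-η,ν̂}, ν̂)/h(A_{τ+η,ν̂}, ν̂) ≥ 1 - e^{-ε/2}δ/3, where h(A, ν) = ∫_A exp(-φ(x,ν)ε/(4η))dx and A_{t,ν} = {x : φ(x,ν) ≤ t}. Then for all ν̃ adjacent to ν̂ and all measurable E: EM_ν̂(E) ≤ (e^{ε/2} + 2δ/3) EM_ν̃(E) + δ/3 and EM_ν̃(E) ≤ (e^{ε/2} + 2δ/3) EM_ν̂(E) + δ/3; in particular (EM, ν̂) is (ε/2, δ)-safe. -/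

import Mathlib

open MeasureTheory Real

noncomputable section

variable {d : ℕ} {D : Type*}

/-- `h(A, ν) = ∫_A exp(-φ(x, ν) ε/(4η)) dx` with respect to Lebesgue measure on `ℝ^d`. -/
def hInt (φ : EuclideanSpace ℝ (Fin d) → ℝ) (β : ℝ) (A : Set (EuclideanSpace ℝ (Fin d))) :
    ENNReal :=
  ∫⁻ x in A, ENNReal.ofReal (exp (-(φ x) * β))

/-- The `t`-level set `A_{t,ν} = {x : φ(x, ν) ≤ t}`. -/
def Aset (φ : D → EuclideanSpace ℝ (Fin d) → ℝ) (ν : D) (t : ℝ) :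
    Set (EuclideanSpace ℝ (Fin d)) := {x | φ ν x ≤ t}

/-- The (truncated) exponential mechanism applied to the cost `φ(·, ν)`:
`EM_ν(B) = h(B ∩ A_{τ,ν}, ν) / h(A_{τ,ν}, ν)`. -/
def EMech (φ : D → EuclideanSpace ℝ (Fin d) → ℝ) (τ η ε : ℝ) (ν : D)
    (B : Set (EuclideanSpace ℝ (Fin d))) : ENNReal :=
  hInt (φ ν) (ε / (4 * η)) (B ∩ Aset φ ν τ) / hInt (φ ν) (ε / (4 * η)) (Aset φ ν τ)

/-- Monotonicity of `hInt` in the set. -/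
lemma hInt_mono {φ : EuclideanSpace ℝ (Fin d) → ℝ} {β : ℝ}
    {A B : Set (EuclideanSpace ℝ (Fin d))} (h : A ⊆ B) : hInt φ β A ≤ hInt φ β B :=
  lintegral_mono_set h

/-- Additivity of `hInt` on disjoint unions. -/
lemma hInt_union {φ : EuclideanSpace ℝ (Fin d) → ℝ} {β : ℝ}
    {A B : Set (EuclideanSpace ℝ (Fin d))} (hB : MeasurableSet B) (hAB : Disjoint A B) :
    hInt φ β (A ∪ B) = hInt φ β A + hInt φ β B :=
  lintegral_union hB hAB

/-- Comparison of `hInt` for two cost functions that differ by at most `η` on `S`. -/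
lemma hInt_le_exp_mul {φ₁ φ₂ : EuclideanSpace ℝ (Fin d) → ℝ} {β η : ℝ}
    (hβ : 0 ≤ β) {S : Set (EuclideanSpace ℝ (Fin d))} (hS : MeasurableSet S)
    (h : ∀ x ∈ S, φ₂ x - η ≤ φ₁ x) :
    hInt φ₁ β S ≤ ENNReal.ofReal (exp (η * β)) * hInt φ₂ β S := by
  rw [hInt, hInt, ← lintegral_const_mul' _ _ ENNReal.ofReal_ne_top]
  refine setLIntegral_mono' hS fun x hx => ?_
  rw [← ENNReal.ofReal_mul (exp_pos _).le, ← exp_add]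
  refine ENNReal.ofReal_le_ofReal (exp_le_exp.2 ?_)
  have := h x hx
  nlinarith

/-- Safety of the exponential mechanism: under the local insensitivity condition (i) and
the level-contour mass condition (ii), for every adjacent `ν̃` and every measurable `E`,
`EM_ν̂(E) ≤ (e^{ε/2} + 2δ/3) EM_ν̃(E) + δ/3` and symmetrically; in particular `(EM, ν̂)` is
`(ε/2, δ)`-safe. -/
theorem EMech_safe
    (Adj : D → D → Prop)
    (φ : D → EuclideanSpace ℝ (Fin d) → ℝ) (hφmeas : ∀ ν, Measurable (φ ν))
    (ε η τ δ : ℝ) (hε : 0 < ε) (hη : 0 < η) (hητ : η ≤ τ)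
    (hδ0 : 0 < δ) (hδ : δ ≤ exp (-(ε / 2)) / 2)
    (νhat : D)
    (hfin : ∀ ν', (ν' = νhat ∨ Adj νhat ν') →
      0 < hInt (φ ν') (ε / (4 * η)) (Aset φ ν' τ) ∧
      hInt (φ ν') (ε / (4 * η)) (Aset φ ν' (τ + η)) < ⊤)
    (hyp1 : ∀ ν', Adj νhat ν' → ∀ x, (φ νhat x ≤ τ ∨ φ ν' x ≤ τ) →
      |φ νhat x - φ ν' x| ≤ η)
    (hyp2 : ENNReal.ofReal (1 - exp (-(ε / 2)) * δ / 3) *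
        hInt (φ νhat) (ε / (4 * η)) (Aset φ νhat (τ + η)) ≤
      hInt (φ νhat) (ε / (4 * η)) (Aset φ νhat (τ - η))) :
    ∀ ν', Adj νhat ν' → ∀ E : Set (EuclideanSpace ℝ (Fin d)), MeasurableSet E →
      (EMech φ τ η ε νhat E ≤
          ENNReal.ofReal (exp (ε / 2) + 2 * δ / 3) * EMech φ τ η ε ν' E +
            ENNReal.ofReal (δ / 3) ∧
        EMech φ τ η ε ν' E ≤
          ENNReal.ofReal (exp (ε / 2) + 2 * δ / 3) * EMech φ τ η ε νhat E +
            ENNReal.ofReal (δ / 3)) ∧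
      (EMech φ τ η ε νhat E ≤
          ENNReal.ofReal (exp (ε / 2)) * EMech φ τ η ε ν' E + ENNReal.ofReal δ ∧
        EMech φ τ η ε ν' E ≤
          ENNReal.ofReal (exp (ε / 2)) * EMech φ τ η ε νhat E + ENNReal.ofReal δ) := by
  intro ν' hadj E hE
  have hcomp := hyp1 ν' hadj
  set β := ε / (4 * η) with hβdef
  have hβ : 0 < β := by positivity
  have hηβ : η * β = ε / 4 := by rw [hβdef]; field_simp
  -- real-number facts about x = e^{-ε/2} δ / 3
  set x : ℝ := exp (-(ε / 2)) * δ / 3 with hxdef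
  have hexp1 : exp (-(ε / 2)) ≤ 1 := by
    rw [← exp_zero]; exact exp_le_exp.2 (by linarith)
  have hexppos := exp_pos (-(ε / 2))
  have hx0 : 0 < x := by positivity
  have hx6 : x ≤ 1 / 6 := by
    rw [hxdef]; nlinarith
  have hx1 : x < 1 := by linarith
  have hxδ : x ≤ δ / 3 := by rw [hxdef]; nlinarith
  have hex : exp (ε / 2) * x = δ / 3 := by
    rw [hxdef, show exp (-(ε / 2)) * δ / 3 = exp (-(ε / 2)) * (δ / 3) by ring,
      ← mul_assoc, ← exp_add]
    simp
  have hreal1 : exp (ε / 2) * (1 / (1 - x)) ≤ exp (ε / 2) + 2 * δ / 3 := by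
    rw [mul_one_div, div_le_iff₀ (by linarith : (0:ℝ) < 1 - x)]
    nlinarith [exp_pos (ε / 2), hex, hx0, hx6, hδ0]
  -- measurable sets
  have mA : ∀ (ν : D) (t : ℝ), MeasurableSet (Aset φ ν t) := fun ν t =>
    hφmeas ν measurableSet_Iic
  set P := Aset φ νhat τ with hPdef
  set Pm := Aset φ νhat (τ - η) with hPmdef
  set Pp := Aset φ νhat (τ + η) with hPpdef
  set Q := Aset φ ν' τ with hQdef
  have mP := mA νhat τ
  have mPm := mA νhat (τ - η)
  have mPp := mA νhat (τ + η)
  have mQ := mA ν' τ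
  -- set inclusions
  have hPmP : Pm ⊆ P := fun y hy => by
    have hy' : φ νhat y ≤ τ - η := hy; show φ νhat y ≤ τ; linarith
  have hPPp : P ⊆ Pp := fun y hy => by
    have hy' : φ νhat y ≤ τ := hy; show φ νhat y ≤ τ + η; linarith
  have hPmQ : Pm ⊆ Q := fun y hy => by
    have hy' : φ νhat y ≤ τ - η := hy
    have h1 := abs_le.mp (hcomp y (Or.inl (by linarith)))
    show φ ν' y ≤ τ; linarith [h1.1]
  have hQPp : Q ⊆ Pp := fun y hy => by
    have hy' : φ ν' y ≤ τ := hy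
    have h1 := abs_le.mp (hcomp y (Or.inr hy'))
    show φ νhat y ≤ τ + η; linarith [h1.2]
  have hPdiffQ : P \ Q ⊆ P \ Pm := fun y hy => by
    refine ⟨hy.1, fun hcon => ?_⟩
    have hy1 : φ νhat y ≤ τ := hy.1
    have hy2 : ¬ (φ ν' y ≤ τ) := hy.2
    have hy3 : φ νhat y ≤ τ - η := hcon
    have h1 := abs_le.mp (hcomp y (Or.inl hy1))
    exact hy2 (by linarith [h1.1])
  have hQdiffP : Q \ P ⊆ Pp \ Pm := fun y hy => by
    have hy1 : φ ν' y ≤ τ := hy.1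
    have hy2 : ¬ (φ νhat y ≤ τ) := hy.2
    refine ⟨hQPp hy.1, fun hcon => ?_⟩
    have hy3 : φ νhat y ≤ τ - η := hcon
    exact hy2 (by linarith)
  -- basic finiteness/positivity
  obtain ⟨hP0, hPpfin⟩ := hfin νhat (Or.inl rfl)
  obtain ⟨hQ0, hQpfin⟩ := hfin ν' (Or.inr hadj)
  have hPfin : hInt (φ νhat) β P ≠ ⊤ := ((hInt_mono hPPp).trans_lt hPpfin).ne
  have hPmfin : hInt (φ νhat) β Pm ≠ ⊤ :=
    ((hInt_mono (hPmP.trans hPPp)).trans_lt hPpfin).ne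
  have hQfin : hInt (φ ν') β Q ≠ ⊤ := by
    refine ((hInt_mono ?_).trans_lt hQpfin).ne
    exact fun y (hy : φ ν' y ≤ τ) => show φ ν' y ≤ τ + η by linarith
  -- pointwise comparison lemmas, both directions
  set c : ENNReal := ENNReal.ofReal (exp (ε / 4)) with hcdef
  have hcne0 : c ≠ 0 := by
    rw [hcdef]; exact (ENNReal.ofReal_pos.2 (exp_pos _)).ne'
  have hcnetop : c ≠ ⊤ := ENNReal.ofReal_ne_top
  have hcc : c * c = ENNReal.ofReal (exp (ε / 2)) := by
    rw [hcdef, ← ENNReal.ofReal_mul (exp_pos _).le, ← exp_add,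
      show ε / 4 + ε / 4 = ε / 2 by ring]
  have cmp1 : ∀ S : Set (EuclideanSpace ℝ (Fin d)), MeasurableSet S → S ⊆ P ∪ Q →
      hInt (φ νhat) β S ≤ c * hInt (φ ν') β S := by
    intro S hS hsub
    have := hInt_le_exp_mul (η := η) hβ.le hS (φ₁ := φ νhat) (φ₂ := φ ν') (fun y hy => by
      have hor : φ νhat y ≤ τ ∨ φ ν' y ≤ τ := hsub hy
      have h1 := abs_le.mp (hcomp y hor)
      linarith [h1.1])
    rwa [hηβ] at this
  have cmp2 : ∀ S : Set (EuclideanSpace ℝ (Fin d)), MeasurableSet S → S ⊆ P ∪ Q →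
      hInt (φ ν') β S ≤ c * hInt (φ νhat) β S := by
    intro S hS hsub
    have := hInt_le_exp_mul (η := η) hβ.le hS (φ₁ := φ ν') (φ₂ := φ νhat) (fun y hy => by
      have hor : φ νhat y ≤ τ ∨ φ ν' y ≤ τ := hsub hy
      have h1 := abs_le.mp (hcomp y hor)
      linarith [h1.2])
    rwa [hηβ] at this
  -- ENNReal constants
  have hofR1x : ENNReal.ofReal (1 / (1 - x)) * ENNReal.ofReal (1 - x) = 1 := by
    rw [← ENNReal.ofReal_mul (one_div_nonneg.2 (by linarith)), one_div,
      inv_mul_cancel₀ (by linarith : (1:ℝ) - x ≠ 0), ENNReal.ofReal_one]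
  have hone : (1 : ENNReal) - ENNReal.ofReal (1 - x) = ENNReal.ofReal x := by
    rw [← ENNReal.ofReal_one, ← ENNReal.ofReal_sub _ (by linarith)]
    congr 1; ring
  -- hyp2 in local notation
  have hyp2' : ENNReal.ofReal (1 - x) * hInt (φ νhat) β Pp ≤ hInt (φ νhat) β Pm := hyp2
  have hPm0 : hInt (φ νhat) β Pm ≠ 0 := by
    refine fun hcon => hP0.ne' ?_
    have h1 : ENNReal.ofReal (1 - x) * hInt (φ νhat) β P ≤ hInt (φ νhat) β Pm :=
      le_trans (mul_le_mul_right (hInt_mono hPPp) _) hyp2'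
    rw [hcon, nonpos_iff_eq_zero] at h1
    rcases mul_eq_zero.mp h1 with h | h
    · exact absurd h (by simp [ENNReal.ofReal_eq_zero]; linarith)
    · exact h
  -- Pp bounded by (1/(1-x)) * Pm and by (1/(1-x)) * P
  have hPp_le_Pm : hInt (φ νhat) β Pp ≤ ENNReal.ofReal (1 / (1 - x)) * hInt (φ νhat) β Pm := by
    calc hInt (φ νhat) β Pp
        = ENNReal.ofReal (1 / (1 - x)) * ENNReal.ofReal (1 - x) * hInt (φ νhat) β Pp := by
          rw [hofR1x, one_mul]
      _ ≤ ENNReal.ofReal (1 / (1 - x)) * hInt (φ νhat) β Pm := by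
          rw [mul_assoc]; exact mul_le_mul_right hyp2' _
  have hPp_le_P : hInt (φ νhat) β Pp ≤ ENNReal.ofReal (1 / (1 - x)) * hInt (φ νhat) β P :=
    hPp_le_Pm.trans (mul_le_mul_right (hInt_mono hPmP) _)
  -- names for the main quantities
  set U := hInt (φ νhat) β (E ∩ P) with hUdef
  set V := hInt (φ ν') β (E ∩ Q) with hVdef
  have hsubA : E ∩ P ∩ Q ⊆ P ∪ Q := fun y hy => Or.inl hy.1.2
  have hsubB : E ∩ P ∩ Q ⊆ E ∩ Q := fun y hy => ⟨hy.1.1, hy.2⟩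
  have hsubC : E ∩ Q ∩ P ⊆ P ∪ Q := fun y hy => Or.inr hy.1.2
  have hsubD : E ∩ Q ∩ P ⊆ E ∩ P := fun y hy => ⟨hy.1.1, hy.2⟩
  have hsubE : (E ∩ Q) \ P ⊆ P ∪ Q := fun y hy => Or.inr hy.1.2
  have hsubF : (E ∩ Q) \ P ⊆ Q \ P := fun y hy => ⟨hy.1.2, hy.2⟩
  have hsubG : Q \ P ⊆ P ∪ Q := fun y hy => Or.inr hy.1
  have hsubH : Pm ⊆ P ∪ Q := fun y hy => Or.inl (hPmP hy)
  have hdisj1 : Disjoint (E ∩ P ∩ Q) ((E ∩ P) \ Q) :=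
    Set.disjoint_left.mpr fun y hy hy2 => hy2.2 hy.2
  have hdisj2 : Disjoint (E ∩ Q ∩ P) ((E ∩ Q) \ P) :=
    Set.disjoint_left.mpr fun y hy hy2 => hy2.2 hy.2
  have hsubI : (E ∩ P) \ Q ⊆ P \ Pm := fun y hy => hPdiffQ ⟨hy.1.2, hy.2⟩
  have hEMhat : EMech φ τ η ε νhat E = U / hInt (φ νhat) β P := rfl
  have hEMtil : EMech φ τ η ε ν' E = V / hInt (φ ν') β Q := rfl
  -- the key inequality, direction 1
  have key1 : EMech φ τ η ε νhat E ≤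
      ENNReal.ofReal (exp (ε / 2) + 2 * δ / 3) * EMech φ τ η ε ν' E +
        ENNReal.ofReal (δ / 3) := by
    rw [hEMhat, hEMtil, ENNReal.div_le_iff hP0.ne' hPfin]
    have hsplit : U = hInt (φ νhat) β (E ∩ P ∩ Q) + hInt (φ νhat) β ((E ∩ P) \ Q) := by
      conv_lhs => rw [hUdef, ← Set.inter_union_diff (E ∩ P) Q]
      exact hInt_union ((hE.inter mP).diff mQ) hdisj1
    -- bound on the off-Q part
    have hU2 : hInt (φ νhat) β ((E ∩ P) \ Q) ≤ ENNReal.ofReal (δ / 3) * hInt (φ νhat) β P := by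
      have h1 : hInt (φ νhat) β ((E ∩ P) \ Q) ≤ hInt (φ νhat) β (P \ Pm) :=
        hInt_mono hsubI
      have hsum : hInt (φ νhat) β (P \ Pm) + hInt (φ νhat) β Pm = hInt (φ νhat) β P := by
        rw [← hInt_union mPm (Set.disjoint_left.mpr fun y hy hy2 => hy.2 hy2),
          Set.diff_union_of_subset hPmP]
      have h2 : hInt (φ νhat) β (P \ Pm) = hInt (φ νhat) β P - hInt (φ νhat) β Pm :=
        ENNReal.eq_sub_of_add_eq hPmfin hsum
      have h3 : ENNReal.ofReal (1 - x) * hInt (φ νhat) β P ≤ hInt (φ νhat) β Pm :=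
        le_trans (mul_le_mul_right (hInt_mono hPPp) _) hyp2'
      have h4 : hInt (φ νhat) β (P \ Pm) ≤ ENNReal.ofReal x * hInt (φ νhat) β P := by
        rw [h2]
        calc hInt (φ νhat) β P - hInt (φ νhat) β Pm
            ≤ hInt (φ νhat) β P - ENNReal.ofReal (1 - x) * hInt (φ νhat) β P :=
              tsub_le_tsub_left h3 _
          _ = (1 - ENNReal.ofReal (1 - x)) * hInt (φ νhat) β P := by
              rw [ENNReal.sub_mul fun _ _ => hPfin, one_mul]
          _ = ENNReal.ofReal x * hInt (φ νhat) β P := by rw [hone]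
      exact (h1.trans h4).trans
        (mul_le_mul_left (ENNReal.ofReal_le_ofReal hxδ) _)
    -- bound on the main part
    have hQle : hInt (φ ν') β Q ≤
        c * (ENNReal.ofReal (1 / (1 - x)) * hInt (φ νhat) β P) := by
      calc hInt (φ ν') β Q ≤ c * hInt (φ νhat) β Q := cmp2 Q mQ Set.subset_union_right
        _ ≤ c * hInt (φ νhat) β Pp := mul_le_mul_right (hInt_mono hQPp) _
        _ ≤ c * (ENNReal.ofReal (1 / (1 - x)) * hInt (φ νhat) β P) :=
            mul_le_mul_right hPp_le_P _
    have hU1 : hInt (φ νhat) β (E ∩ P ∩ Q) ≤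
        ENNReal.ofReal (exp (ε / 2) + 2 * δ / 3) * (V / hInt (φ ν') β Q) *
          hInt (φ νhat) β P := by
      calc hInt (φ νhat) β (E ∩ P ∩ Q)
          ≤ c * hInt (φ ν') β (E ∩ P ∩ Q) :=
            cmp1 _ ((hE.inter mP).inter mQ) hsubA
        _ ≤ c * V := mul_le_mul_right (hInt_mono hsubB) _
        _ = c * ((V / hInt (φ ν') β Q) * hInt (φ ν') β Q) := by
            rw [ENNReal.div_mul_cancel hQ0.ne' hQfin]
        _ ≤ c * ((V / hInt (φ ν') β Q) *
              (c * (ENNReal.ofReal (1 / (1 - x)) * hInt (φ νhat) β P))) := by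
            gcongr
        _ = (c * c * ENNReal.ofReal (1 / (1 - x))) * (V / hInt (φ ν') β Q) *
              hInt (φ νhat) β P := by ring
        _ ≤ ENNReal.ofReal (exp (ε / 2) + 2 * δ / 3) * (V / hInt (φ ν') β Q) *
              hInt (φ νhat) β P := by
            refine mul_le_mul_left (mul_le_mul_left ?_ _) _
            rw [hcc, ← ENNReal.ofReal_mul (exp_pos _).le]
            exact ENNReal.ofReal_le_ofReal hreal1
    calc U = hInt (φ νhat) β (E ∩ P ∩ Q) + hInt (φ νhat) β ((E ∩ P) \ Q) := hsplit
      _ ≤ ENNReal.ofReal (exp (ε / 2) + 2 * δ / 3) * (V / hInt (φ ν') β Q) *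
            hInt (φ νhat) β P + ENNReal.ofReal (δ / 3) * hInt (φ νhat) β P :=
          add_le_add hU1 hU2
      _ = (ENNReal.ofReal (exp (ε / 2) + 2 * δ / 3) * (V / hInt (φ ν') β Q) +
            ENNReal.ofReal (δ / 3)) * hInt (φ νhat) β P := by ring
  -- the key inequality, direction 2
  have key2 : EMech φ τ η ε ν' E ≤
      ENNReal.ofReal (exp (ε / 2) + 2 * δ / 3) * EMech φ τ η ε νhat E +
        ENNReal.ofReal (δ / 3) := by
    rw [hEMhat, hEMtil]
    set M := hInt (φ νhat) β (Q \ P) with hMdef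
    have hMfin : M ≠ ⊤ := ((hInt_mono ((Set.diff_subset).trans hQPp)).trans_lt hPpfin).ne
    have hMx : M ≤ ENNReal.ofReal x * hInt (φ νhat) β Pp := by
      have h1 : M ≤ hInt (φ νhat) β (Pp \ Pm) := hInt_mono hQdiffP
      have hsum : hInt (φ νhat) β (Pp \ Pm) + hInt (φ νhat) β Pm = hInt (φ νhat) β Pp := by
        rw [← hInt_union mPm (Set.disjoint_left.mpr fun y hy hy2 => hy.2 hy2),
          Set.diff_union_of_subset (hPmP.trans hPPp)]
      have h2 : hInt (φ νhat) β (Pp \ Pm) = hInt (φ νhat) β Pp - hInt (φ νhat) β Pm :=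
        ENNReal.eq_sub_of_add_eq hPmfin hsum
      refine h1.trans ?_
      rw [h2]
      calc hInt (φ νhat) β Pp - hInt (φ νhat) β Pm
          ≤ hInt (φ νhat) β Pp - ENNReal.ofReal (1 - x) * hInt (φ νhat) β Pp :=
            tsub_le_tsub_left hyp2' _
        _ = (1 - ENNReal.ofReal (1 - x)) * hInt (φ νhat) β Pp := by
            rw [ENNReal.sub_mul fun _ _ => hPpfin.ne, one_mul]
        _ = ENNReal.ofReal x * hInt (φ νhat) β Pp := by rw [hone]
    -- (1-x) M ≤ x Pm, hence M/(Pm+M) ≤ x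
    have hMx2 : ENNReal.ofReal (1 - x) * M ≤ ENNReal.ofReal x * hInt (φ νhat) β Pm := by
      calc ENNReal.ofReal (1 - x) * M
          ≤ ENNReal.ofReal (1 - x) * (ENNReal.ofReal x * hInt (φ νhat) β Pp) :=
            mul_le_mul_right hMx _
        _ = ENNReal.ofReal x * (ENNReal.ofReal (1 - x) * hInt (φ νhat) β Pp) := by ring
        _ ≤ ENNReal.ofReal x * hInt (φ νhat) β Pm := mul_le_mul_right hyp2' _
    have hMle : M ≤ ENNReal.ofReal x * (hInt (φ νhat) β Pm + M) := by
      have h1 : M = ENNReal.ofReal (1 - x) * M + ENNReal.ofReal x * M := by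
        rw [← add_mul, ← ENNReal.ofReal_add (by linarith) hx0.le,
          show (1 - x) + x = 1 by ring, ENNReal.ofReal_one, one_mul]
      rw [mul_add]
      calc M = ENNReal.ofReal (1 - x) * M + ENNReal.ofReal x * M := h1
        _ ≤ ENNReal.ofReal x * hInt (φ νhat) β Pm + ENNReal.ofReal x * M :=
            add_le_add_left hMx2 _
    have hdenfin : hInt (φ νhat) β Pm + M ≠ ⊤ :=
      ENNReal.add_ne_top.2 ⟨hPmfin, hMfin⟩
    have hden0 : hInt (φ νhat) β Pm + M ≠ 0 := fun h =>
      hPm0 (nonpos_iff_eq_zero.mp (h ▸ le_self_add))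
    have hMdiv : M / (hInt (φ νhat) β Pm + M) ≤ ENNReal.ofReal x :=
      (ENNReal.div_le_iff hden0 hdenfin).2 (by rw [mul_comm] at hMle ⊢; exact hMle)
    -- numerator bound: V ≤ c (U + M)
    have hVle : V ≤ c * (U + M) := by
      have hsplit : V = hInt (φ ν') β (E ∩ Q ∩ P) + hInt (φ ν') β ((E ∩ Q) \ P) := by
        conv_lhs => rw [hVdef, ← Set.inter_union_diff (E ∩ Q) P]
        exact hInt_union ((hE.inter mQ).diff mP) hdisj2
      have h1 : hInt (φ ν') β (E ∩ Q ∩ P) ≤ c * U := by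
        calc hInt (φ ν') β (E ∩ Q ∩ P)
            ≤ c * hInt (φ νhat) β (E ∩ Q ∩ P) :=
              cmp2 _ ((hE.inter mQ).inter mP) hsubC
          _ ≤ c * U := mul_le_mul_right (hInt_mono hsubD) _
      have h2 : hInt (φ ν') β ((E ∩ Q) \ P) ≤ c * M := by
        calc hInt (φ ν') β ((E ∩ Q) \ P)
            ≤ c * hInt (φ νhat) β ((E ∩ Q) \ P) :=
              cmp2 _ ((hE.inter mQ).diff mP) hsubE
          _ ≤ c * M := mul_le_mul_right (hInt_mono hsubF) _
      rw [hsplit, mul_add]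
      exact add_le_add h1 h2
    -- denominator bound: Pm + M ≤ c * Q
    have hden : hInt (φ νhat) β Pm + M ≤ c * hInt (φ ν') β Q := by
      have h1 : hInt (φ νhat) β Pm ≤ c * hInt (φ ν') β Pm :=
        cmp1 Pm mPm hsubH
      have h2 : M ≤ c * hInt (φ ν') β (Q \ P) :=
        cmp1 _ (mQ.diff mP) hsubG
      have h3 : hInt (φ ν') β Pm + hInt (φ ν') β (Q \ P) ≤ hInt (φ ν') β Q := by
        rw [← hInt_union (mQ.diff mP)
          (Set.disjoint_left.mpr fun y hy hy2 => hy2.2 (hPmP hy))]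
        exact hInt_mono (Set.union_subset hPmQ Set.diff_subset)
      calc hInt (φ νhat) β Pm + M
          ≤ c * hInt (φ ν') β Pm + c * hInt (φ ν') β (Q \ P) := add_le_add h1 h2
        _ = c * (hInt (φ ν') β Pm + hInt (φ ν') β (Q \ P)) := by rw [mul_add]
        _ ≤ c * hInt (φ ν') β Q := mul_le_mul_right h3 _
    -- U / Pm ≤ (1/(1-x)) * (U / P)
    have hUdiv : U / hInt (φ νhat) β Pm ≤
        ENNReal.ofReal (1 / (1 - x)) * (U / hInt (φ νhat) β P) := by
      have hkne0 : ENNReal.ofReal (1 / (1 - x)) ≠ 0 :=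
        (ENNReal.ofReal_pos.2 (one_div_pos.2 (by linarith))).ne'
      have hHP : hInt (φ νhat) β P ≤
          ENNReal.ofReal (1 / (1 - x)) * hInt (φ νhat) β Pm :=
        (hInt_mono hPPp).trans hPp_le_Pm
      calc U / hInt (φ νhat) β Pm
          = ENNReal.ofReal (1 / (1 - x)) * U /
              (ENNReal.ofReal (1 / (1 - x)) * hInt (φ νhat) β Pm) := by
            rw [ENNReal.mul_div_mul_left _ _ hkne0 ENNReal.ofReal_ne_top]
        _ ≤ ENNReal.ofReal (1 / (1 - x)) * U / hInt (φ νhat) β P :=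
            ENNReal.div_le_div le_rfl hHP
        _ = ENNReal.ofReal (1 / (1 - x)) * (U / hInt (φ νhat) β P) := by
            rw [mul_div_assoc]
    -- put it together
    calc V / hInt (φ ν') β Q
        ≤ (c * (U + M)) / hInt (φ ν') β Q := ENNReal.div_le_div hVle le_rfl
      _ = (c * (c * (U + M))) / (c * hInt (φ ν') β Q) := by
          rw [ENNReal.mul_div_mul_left _ _ hcne0 hcnetop]
      _ ≤ (c * c * (U + M)) / (hInt (φ νhat) β Pm + M) := by
          rw [← mul_assoc]; exact ENNReal.div_le_div le_rfl hden
      _ = c * c * ((U + M) / (hInt (φ νhat) β Pm + M)) := by rw [mul_div_assoc]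
      _ ≤ c * c * (U / hInt (φ νhat) β Pm + ENNReal.ofReal x) := by
          refine mul_le_mul_right ?_ _
          rw [ENNReal.add_div]
          exact add_le_add (ENNReal.div_le_div le_rfl le_self_add) hMdiv
      _ = c * c * (U / hInt (φ νhat) β Pm) + c * c * ENNReal.ofReal x := by rw [mul_add]
      _ ≤ ENNReal.ofReal (exp (ε / 2) + 2 * δ / 3) * (U / hInt (φ νhat) β P) +
            ENNReal.ofReal (δ / 3) := by
          refine add_le_add ?_ ?_
          · calc c * c * (U / hInt (φ νhat) β Pm)
                ≤ c * c * (ENNReal.ofReal (1 / (1 - x)) * (U / hInt (φ νhat) β P)) :=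
                  mul_le_mul_right hUdiv _
              _ = (c * c * ENNReal.ofReal (1 / (1 - x))) * (U / hInt (φ νhat) β P) := by
                  ring
              _ ≤ ENNReal.ofReal (exp (ε / 2) + 2 * δ / 3) * (U / hInt (φ νhat) β P) := by
                  refine mul_le_mul_left ?_ _
                  rw [hcc, ← ENNReal.ofReal_mul (exp_pos _).le]
                  exact ENNReal.ofReal_le_ofReal hreal1
          · rw [hcc, ← ENNReal.ofReal_mul (exp_pos _).le, hex]
  -- weaker consequences
  have hEMle1 : ∀ ν'' : D, EMech φ τ η ε ν'' E ≤ 1 := by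
    intro ν''
    rw [EMech]
    exact ENNReal.div_le_of_le_mul (by rw [one_mul]; exact hInt_mono Set.inter_subset_right)
  have weaken : ∀ A M : ENNReal, M ≤ 1 →
      A ≤ ENNReal.ofReal (exp (ε / 2) + 2 * δ / 3) * M + ENNReal.ofReal (δ / 3) →
      A ≤ ENNReal.ofReal (exp (ε / 2)) * M + ENNReal.ofReal δ := by
    intro A M hM h
    refine h.trans ?_
    rw [ENNReal.ofReal_add (exp_pos _).le (by positivity), add_mul, add_assoc]
    refine add_le_add_right ?_ _
    calc ENNReal.ofReal (2 * δ / 3) * M + ENNReal.ofReal (δ / 3)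
        ≤ ENNReal.ofReal (2 * δ / 3) * 1 + ENNReal.ofReal (δ / 3) := by gcongr
      _ = ENNReal.ofReal δ := by
          rw [mul_one, ← ENNReal.ofReal_add (by positivity) (by positivity)]
          congr 1; ring
  exact ⟨⟨key1, key2⟩, weaken _ _ (hEMle1 ν') key1, weaken _ _ (hEMle1 νhat) key2⟩

end
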